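/- Let σ > 0, let a, b > 0 and let c ∈ ℝ with |c| < a + b. Then (a+b+c)^{−σ} + (a+b−c)^{−σ} − 2 a^{−σ} ≥ 2σ a^{−σ−1} · ( −b + ((σ+1)/2) · (1 − (σ+2)·(b/a)) · (c²/a) ). -/

import Mathlib

open Real Set

/-- Tangent line inequality for `x ↦ x^{-s}` at `a`. -/
private lemma tangent_line {s a x : ℝ} (hs : 0 < s) (ha : 0 < a) (hx : 0 < x) :
    a ^ (-s) - s * a ^ (-s - 1) * (x - a) ≤ x ^ (-s) := by
  have h1s : (0:ℝ) < 1 + s := by linarith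
  have h1s' : (1 + s) ≠ 0 := ne_of_gt h1s
  have key := Real.geom_mean_le_arith_mean2_weighted
    (w₁ := 1/(1+s)) (w₂ := s/(1+s)) (p₁ := x ^ (-s)) (p₂ := a ^ (-s-1) * x)
    (by positivity) (by positivity)
    (Real.rpow_pos_of_pos hx _).le
    (by positivity)
    (by field_simp)
  have hgm : (x ^ (-s)) ^ (1/(1+s)) * (a ^ (-s-1) * x) ^ (s/(1+s)) = a ^ (-s) := by
    rw [Real.mul_rpow (by positivity) hx.le, ← Real.rpow_mul hx.le, ← Real.rpow_mul ha.le]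
    rw [show (-s) * (1/(1+s)) = -(s/(1+s)) by field_simp,
        show (-s-1) * (s/(1+s)) = -s by field_simp; ring]
    rw [mul_comm (a ^ (-s)) (x ^ (s/(1+s))), ← mul_assoc, ← Real.rpow_add hx,
        neg_add_cancel, Real.rpow_zero, one_mul]
  rw [hgm] at key
  have hcomb : 1/(1+s) * x ^ (-s) + s/(1+s) * (a ^ (-s-1) * x)
      = (x ^ (-s) + s * (a ^ (-s-1) * x)) / (1+s) := by ring
  rw [hcomb, le_div_iff₀ h1s] at key
  have haa : a ^ (-s - 1) * a = a ^ (-s) := by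
    rw [← Real.rpow_add_one ha.ne' (-s-1)]
    congr 1; ring
  have expand : s * a ^ (-s - 1) * (x - a)
      = s * (a ^ (-s-1) * x) - s * (a ^ (-s-1) * a) := by ring
  rw [expand, haa]
  nlinarith [key]

/-- Midpoint convexity consequence for `x ↦ x^{-s}`. -/
private lemma midpoint_two {s u v : ℝ} (hs : 0 < s) (hu : 0 < u) (hv : 0 < v) :
    2 * (((u+v)/2) ^ (-s)) ≤ u ^ (-s) + v ^ (-s) := by
  have hm : (0:ℝ) < (u+v)/2 := by linarith
  have h1 := tangent_line hs hm hu
  have h2 := tangent_line hs hm hv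
  have hz : s * ((u+v)/2) ^ (-s-1) * (u - (u+v)/2)
      + s * ((u+v)/2) ^ (-s-1) * (v - (u+v)/2) = 0 := by ring
  linarith [h1, h2, hz]

private lemma convex_part {s S B : ℝ} (hs : 0 < s) (hS : 0 < S)
    (hB : ∀ t ∈ Ioo (-S) S, 2*B ≤ s*(s+1)*((S+t)^(-s-2) + (S-t)^(-s-2))) :
    ConvexOn ℝ (Ioo (-S) S) (fun t : ℝ => (S+t)^(-s) + (S-t)^(-s) - B*t^2) := by
  have hopen : interior (Ioo (-S) S) = Ioo (-S) S := isOpen_Ioo.interior_eq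
  set G : ℝ → ℝ := fun t => (S+t)^(-s) + (S-t)^(-s) - B*t^2 with hGdef
  set G' : ℝ → ℝ := fun t => (-s)*(S+t)^(-s-1) + s*(S-t)^(-s-1) - B*(2*t) with hG'def
  have hmem : ∀ t ∈ Ioo (-S) S, 0 < S + t ∧ 0 < S - t := by
    rintro t ⟨h1, h2⟩
    constructor <;> linarith
  have hG : ∀ t ∈ Ioo (-S) S, HasDerivAt G (G' t) t := by
    intro t ht
    obtain ⟨hp, hm⟩ := hmem t ht
    have h1 := ((hasDerivAt_id t).const_add S).rpow_const (p := -s) (Or.inl hp.ne')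
    have h2 := ((hasDerivAt_id t).const_sub S).rpow_const (p := -s) (Or.inl hm.ne')
    have h3 := ((hasDerivAt_pow 2 t).const_mul B)
    have h := (h1.add h2).sub h3
    refine h.congr_deriv ?_
    simp only [hG'def, id_eq, Nat.cast_ofNat, pow_one]
    ring
  have hG2 : ∀ t ∈ Ioo (-S) S,
      HasDerivAt G' (s*(s+1)*((S+t)^(-s-2) + (S-t)^(-s-2)) - 2*B) t := by
    intro t ht
    obtain ⟨hp, hm⟩ := hmem t ht
    have h1 := (((hasDerivAt_id t).const_add S).rpow_const (p := -s-1) (Or.inl hp.ne')).const_mul (-s)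
    have h2 := (((hasDerivAt_id t).const_sub S).rpow_const (p := -s-1) (Or.inl hm.ne')).const_mul s
    have h3 := (((hasDerivAt_id t).const_mul (2:ℝ)).const_mul B)
    have h := (h1.add h2).sub h3
    refine h.congr_deriv ?_
    simp only [id_eq]
    rw [show -s-1-1 = -s-2 by ring]
    ring
  have hdiff : DifferentiableOn ℝ G (Ioo (-S) S) :=
    fun x hx => (hG x hx).differentiableAt.differentiableWithinAt
  have hev : ∀ x ∈ Ioo (-S) S, deriv G =ᶠ[nhds x] G' := by
    intro x hx
    filter_upwards [isOpen_Ioo.mem_nhds hx] with y hy using (hG y hy).deriv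
  apply convexOn_of_deriv2_nonneg (convex_Ioo _ _) hdiff.continuousOn
  · rw [hopen]; exact hdiff
  · rw [hopen]
    intro x hx
    exact (((hev x hx).differentiableAt_iff).mpr (hG2 x hx).differentiableAt).differentiableWithinAt
  · rw [hopen]
    intro x hx
    have h2 : deriv (deriv G) x = s*(s+1)*((S+x)^(-s-2) + (S-x)^(-s-2)) - 2*B := by
      rw [(hev x hx).deriv_eq]
      exact (hG2 x hx).deriv
    have : deriv^[2] G x = deriv (deriv G) x := rfl
    rw [this, h2]
    have := hB x hx
    linarith

private lemma midpoint_bound {s S B c : ℝ} (hs : 0 < s) (hS : 0 < S) (hc : |c| < S)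
    (hB : ∀ t ∈ Ioo (-S) S, 2*B ≤ s*(s+1)*((S+t)^(-s-2) + (S-t)^(-s-2))) :
    2 * S ^ (-s) + B * c^2 ≤ (S+c)^(-s) + (S-c)^(-s) := by
  have hconv := convex_part hs hS hB
  obtain ⟨h1, h2⟩ := abs_lt.mp hc
  have hcmem : c ∈ Ioo (-S) S := ⟨h1, h2⟩
  have hcmem' : -c ∈ Ioo (-S) S := ⟨by linarith, by linarith⟩
  have key := hconv.2 hcmem hcmem' (by norm_num : (0:ℝ) ≤ 1/2) (by norm_num : (0:ℝ) ≤ 1/2)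
    (by norm_num)
  simp only [smul_eq_mul] at key
  rw [show (1/2:ℝ)*c + (1/2)*(-c) = 0 by ring] at key
  rw [show S + -c = S - c by ring, show S - -c = S + c by ring, neg_sq] at key
  norm_num at key
  linarith [key]

/-- Let `σ > 0`, `a, b > 0` and `c ∈ ℝ` with `|c| < a + b`. Then
`(a+b+c)^{−σ} + (a+b−c)^{−σ} − 2 a^{−σ}
  ≥ 2σ a^{−σ−1} (−b + ((σ+1)/2)(1 − (σ+2)(b/a))(c²/a))`. -/
theorem abc_inequality (σ a b c : ℝ) (hσ : 0 < σ) (ha : 0 < a) (hb : 0 < b)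
    (hc : |c| < a + b) :
    (a + b + c) ^ (-σ) + (a + b - c) ^ (-σ) - 2 * a ^ (-σ)
      ≥ 2 * σ * a ^ (-σ - 1) *
        (-b + (σ + 1) / 2 * (1 - (σ + 2) * (b / a)) * (c ^ 2 / a)) := by
  have hS : (0:ℝ) < a + b := by linarith
  set B : ℝ := σ*(σ+1)*a^(-σ-2)*(1-(σ+2)*(b/a)) with hBdef
  -- tangent line at a for exponent σ : (a+b)^{-σ} ≥ a^{-σ} - σ a^{-σ-1} b
  have T1 : a ^ (-σ) - σ * a ^ (-σ-1) * b ≤ (a+b) ^ (-σ) := by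
    have := tangent_line hσ ha hS
    rw [show a + b - a = b by ring] at this
    exact this
  -- tangent line at a for exponent σ+2
  have T2 : a ^ (-σ-2) - (σ+2) * a ^ (-σ-3) * b ≤ (a+b) ^ (-σ-2) := by
    have h := tangent_line (s := σ+2) (by linarith) ha hS
    rw [show a + b - a = b by ring, show -(σ+2) = -σ-2 by ring,
        show -σ-2-1 = -σ-3 by ring] at h
    exact h
  have hpow : a ^ (-σ-2) = a ^ (-σ-3) * a := by
    rw [← Real.rpow_add_one ha.ne' (-σ-3)]
    congr 1; ring
  have hBle : B ≤ σ*(σ+1)*(a+b)^(-σ-2) := by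
    have h1 : a^(-σ-2)*(1-(σ+2)*(b/a)) ≤ (a+b)^(-σ-2) := by
      have e : a^(-σ-2)*(1-(σ+2)*(b/a)) = a^(-σ-2) - (σ+2)*a^(-σ-3)*b := by
        rw [hpow]; field_simp
      rw [e]; exact T2
    calc B = σ*(σ+1)*(a^(-σ-2)*(1-(σ+2)*(b/a))) := by rw [hBdef]; ring
    _ ≤ σ*(σ+1)*(a+b)^(-σ-2) := by
        apply mul_le_mul_of_nonneg_left h1 (by positivity)
  have hB : ∀ t ∈ Ioo (-(a+b)) (a+b),
      2*B ≤ σ*(σ+1)*(((a+b)+t)^(-σ-2) + ((a+b)-t)^(-σ-2)) := by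
    rintro t ⟨h1, h2⟩
    have hu : (0:ℝ) < a+b+t := by linarith
    have hv : (0:ℝ) < a+b-t := by linarith
    have hm := midpoint_two (s := σ+2) (by linarith) hu hv
    rw [show ((a+b+t)+(a+b-t))/2 = a+b by ring, show -(σ+2) = -σ-2 by ring] at hm
    have h := mul_le_mul_of_nonneg_left hm (by positivity : (0:ℝ) ≤ σ*(σ+1))
    nlinarith [hBle]
  have main := midpoint_bound (s := σ) (S := a+b) (B := B) (c := c) hσ hS hc hB
  have hpow2 : a ^ (-σ-1) = a ^ (-σ-2) * a := by
    rw [← Real.rpow_add_one ha.ne' (-σ-2)]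
    congr 1; ring
  have hring : 2 * σ * a ^ (-σ - 1) *
      (-b + (σ + 1) / 2 * (1 - (σ + 2) * (b / a)) * (c ^ 2 / a))
      = -(2*σ*b*a^(-σ-1)) + B*c^2 := by
    rw [hBdef, hpow2]
    field_simp
  rw [ge_iff_le, hring]
  have hpow3 : σ * a ^ (-σ-1) * b = σ * b * a ^ (-σ-1) := by ring
  linarith [main, T1]
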